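/- If F ∈ SL(d, ℤ) is not Katznelson irreducible (for a partially hyperbolic splitting S ⊕ C ⊕ U), then there exists a continuous function φ : 𝕋^d → ℝ with trivial periodic cycle functionals along stable/unstable cycles of F which is not cohomologous to a constant, i.e., there is no continuous u with φ = u∘F − u + const. Equivalently: solvability of the cohomological equation for all φ with trivial periodic cycle functionals implies Katznelson irreducibility. -/

import Mathlib

/-- Stable holonomy functional `Hol_x^y φ = Σ_{n≥0} (φ(fⁿx) − φ(fⁿy))`
(junk value if the series does not converge). -/
noncomputable def holS {X : Type*} (T : X → X) (φ : X → ℝ) (x y : X) : ℝ :=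
  ∑' n : ℕ, (φ (T^[n] x) - φ (T^[n] y))

/-- Unstable holonomy functional `Hol_x^y φ = −Σ_{n≥1} (φ(f⁻ⁿx) − φ(f⁻ⁿy))`. -/
noncomputable def holU {X : Type*} (Tinv : X → X) (φ : X → ℝ) (x y : X) : ℝ :=
  -∑' n : ℕ, (φ (Tinv^[n + 1] x) - φ (Tinv^[n + 1] y))

/-- `φ` has trivial periodic cycle functionals: around every closed cycle whose
legs are stable (`sRel`) or unstable (`uRel`) segments, the sum of the
corresponding holonomy functionals vanishes. -/
def TrivialPCF {X : Type*} (T Tinv : X → X) (sRel uRel : X → X → Prop)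
    (φ : X → ℝ) : Prop :=
  ∀ (k : ℕ) (γ : Fin (k + 1) → X) (s : Fin k → Bool),
    γ 0 = γ (Fin.last k) →
    (∀ j : Fin k, if s j then sRel (γ j.castSucc) (γ j.succ)
      else uRel (γ j.castSucc) (γ j.succ)) →
    (∑ j : Fin k, if s j then holS T φ (γ j.castSucc) (γ j.succ)
      else holU Tinv φ (γ j.castSucc) (γ j.succ)) = 0

namespace Stmt17Helpers
open Polynomial Matrix Real


lemma aeval_transpose {n : Type*} [Fintype n] [DecidableEq n] {R : Type*} [CommRing R]
    (M : Matrix n n R) (f : R[X]) :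
    (Polynomial.aeval M f)ᵀ = Polynomial.aeval Mᵀ f := by
  rw [Polynomial.aeval_eq_sum_range, Polynomial.aeval_eq_sum_range, Matrix.transpose_sum]
  exact Finset.sum_congr rfl fun i _ => by rw [Matrix.transpose_smul, Matrix.transpose_pow]

lemma aeval_map_matrix {n : Type*} [Fintype n] [DecidableEq n]
    (K : Type*) [Field K] [Algebra ℚ K] (M : Matrix n n ℚ) (f : ℚ[X]) :
    (Polynomial.aeval M f).map (algebraMap ℚ K) =
      Polynomial.aeval (M.map (algebraMap ℚ K)) f := by
  have h := Polynomial.aeval_algHom_apply ((Algebra.ofId ℚ K).mapMatrix (m := n)) M f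
  exact h.symm

lemma eval_charpoly {n : Type*} [Fintype n] [DecidableEq n] {R : Type*} [CommRing R]
    (M : Matrix n n R) (z : R) :
    M.charpoly.eval z = (z • (1 : Matrix n n R) - M).det := by
  rw [Matrix.charpoly, show (Polynomial.eval z : R[X] → R) = Polynomial.evalRingHom z from rfl,
    RingHom.map_det]
  congr 1
  ext i j
  by_cases h : i = j
  · subst h
    simp [Matrix.charmatrix_apply_eq, Matrix.one_apply]
  · simp [Matrix.charmatrix_apply_ne _ _ _ h, Matrix.one_apply_ne h]

lemma exists_eigenvec {n : Type*} [Fintype n] [DecidableEq n] {M : Matrix n n ℂ} {z : ℂ}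
    (h : M.charpoly.IsRoot z) : ∃ v : n → ℂ, v ≠ 0 ∧ M *ᵥ v = z • v := by
  have hdet : (z • (1 : Matrix n n ℂ) - M).det = 0 := by rw [← eval_charpoly]; exact h
  obtain ⟨v, hv, hMv⟩ := Matrix.exists_mulVec_eq_zero_iff.2 hdet
  refine ⟨v, hv, ?_⟩
  rw [Matrix.sub_mulVec, sub_eq_zero] at hMv
  rw [← hMv, Matrix.smul_mulVec, Matrix.one_mulVec]

lemma sum_mulVec {n m ι : Type*} [Fintype n] {R : Type*} [CommRing R] (s : Finset ι)
    (N : ι → Matrix m n R) (v : n → R) :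
    (∑ i ∈ s, N i) *ᵥ v = ∑ i ∈ s, (N i *ᵥ v) := by
  ext j
  simp [Matrix.mulVec, dotProduct, Finset.sum_apply, Matrix.sum_apply,
    Finset.sum_mul]
  rw [Finset.sum_comm]

lemma aeval_mulVec_eigen {n : Type*} [Fintype n] [DecidableEq n] {M : Matrix n n ℂ} {z : ℂ}
    {v : n → ℂ} (hv : M *ᵥ v = z • v) (f : ℚ[X]) :
    (Polynomial.aeval M f) *ᵥ v = (Polynomial.aeval z f) • v := by
  have hpow : ∀ k : ℕ, (M ^ k) *ᵥ v = (z ^ k) • v := by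
    intro k; induction k with
    | zero => simp
    | succ k ih =>
        rw [pow_succ, ← Matrix.mulVec_mulVec, hv, Matrix.mulVec_smul, ih, smul_smul, pow_succ,
          mul_comm]
  rw [Polynomial.aeval_eq_sum_range, Polynomial.aeval_eq_sum_range, sum_mulVec,
    Finset.sum_smul]
  refine Finset.sum_congr rfl fun i _ => ?_
  rw [Matrix.smul_mulVec, hpow, smul_assoc]

lemma mulVec_map {R S : Type*} [CommRing R] [CommRing S] (σ : R →+* S)
    {m n : Type*} [Fintype n] (M : Matrix m n R) (v : n → R) :
    (M.map σ) *ᵥ (fun j => σ (v j)) = fun i => σ ((M *ᵥ v) i) := by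
  ext i
  simp [Matrix.mulVec, dotProduct, Matrix.map_apply, map_sum]

lemma map_mul_rect {R S : Type*} [CommRing R] [CommRing S] (σ : R →+* S)
    {m n o : Type*} [Fintype n] (M : Matrix m n R) (N : Matrix n o R) :
    (M * N).map σ = M.map σ * N.map σ := Matrix.map_mul



variable {d : ℕ}

lemma restrict_pow (A : (Fin d → ℝ) →ₗ[ℝ] (Fin d → ℝ)) (W : Submodule ℝ (Fin d → ℝ))
    (hW : ∀ x ∈ W, A x ∈ W) (k : ℕ) (x : Fin d → ℝ) (hx : x ∈ W) :
    ((((A.restrict hW) ^ k) ⟨x, hx⟩ : W) : Fin d → ℝ) = (A ^ k) x := by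
  induction k with
  | zero => simp
  | succ k ih =>
      rw [pow_succ', pow_succ', Module.End.mul_apply, Module.End.mul_apply,
        LinearMap.restrict_coe_apply, ih]

lemma restrict_aeval (A : (Fin d → ℝ) →ₗ[ℝ] (Fin d → ℝ)) (W : Submodule ℝ (Fin d → ℝ))
    (hW : ∀ x ∈ W, A x ∈ W) (f : ℝ[X]) (x : Fin d → ℝ) (hx : x ∈ W) :
    (Polynomial.aeval A f) x = (((Polynomial.aeval (A.restrict hW) f) ⟨x, hx⟩ : W) : Fin d → ℝ) := by
  rw [Polynomial.aeval_eq_sum_range, Polynomial.aeval_eq_sum_range]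
  rw [LinearMap.sum_apply, LinearMap.sum_apply]
  rw [Submodule.coe_sum]
  refine Finset.sum_congr rfl fun i _ => ?_
  rw [LinearMap.smul_apply, LinearMap.smul_apply, SetLike.val_smul, restrict_pow]

lemma charpoly_kills (A : (Fin d → ℝ) →ₗ[ℝ] (Fin d → ℝ)) (W : Submodule ℝ (Fin d → ℝ))
    (hW : ∀ x ∈ W, A x ∈ W) (x : Fin d → ℝ) (hx : x ∈ W) :
    (Polynomial.aeval A (LinearMap.charpoly (A.restrict hW))) x = 0 := by
  rw [restrict_aeval A W hW _ x hx, LinearMap.aeval_self_charpoly]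
  rfl

lemma aeval_mulVecLin (M : Matrix (Fin d) (Fin d) ℝ) (f : ℝ[X]) (v : Fin d → ℝ) :
    (Polynomial.aeval (M.mulVecLin) f) v = (Polynomial.aeval M f) *ᵥ v := by
  have h1 : M.mulVecLin = Matrix.toLinAlgEquiv' M := by
    ext w
    simp [Matrix.toLinAlgEquiv'_apply, Matrix.mulVecLin_apply]
  rw [h1, Polynomial.aeval_algHom_apply (Matrix.toLinAlgEquiv' (n := Fin d) (R := ℝ)) M f,
    Matrix.toLinAlgEquiv'_apply]

lemma partA (d : ℕ) (F : Matrix (Fin d) (Fin d) ℤ)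
    (A : (Fin d → ℝ) →ₗ[ℝ] (Fin d → ℝ)) (hA : A = ((F.map (Int.cast : ℤ → ℝ)).mulVecLin))
    (C SU : Submodule ℝ (Fin d → ℝ))
    (hCinv : ∀ x ∈ C, A x ∈ C) (hSUinv : ∀ x ∈ SU, A x ∈ SU)
    (hspec : ∀ z : ℂ, ¬ (((LinearMap.charpoly (A.restrict hCinv)).map (algebraMap ℝ ℂ)).IsRoot z ∧
      ((LinearMap.charpoly (A.restrict hSUinv)).map (algebraMap ℝ ℂ)).IsRoot z))
    (p : Fin d → ℤ) (hp : p ≠ 0) (hpC : (fun i => (p i : ℝ)) ∈ C) :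
    ∃ q : Fin d → ℤ, q ≠ 0 ∧ ∀ v ∈ SU, (fun i => (q i : ℝ)) ⬝ᵥ v = 0 := by
  classical
  set Fq : Matrix (Fin d) (Fin d) ℚ := F.map (Int.cast : ℤ → ℚ) with hFq
  set Fr : Matrix (Fin d) (Fin d) ℝ := F.map (Int.cast : ℤ → ℝ) with hFr
  set Fc : Matrix (Fin d) (Fin d) ℂ := F.map (Int.cast : ℤ → ℂ) with hFc
  set v₀ : Fin d → ℚ := fun i => (p i : ℚ) with hv₀
  have hFqr : Fq.map (algebraMap ℚ ℝ) = Fr := by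
    ext i j; simp [hFq, hFr, Matrix.map_apply]
  have hFqc : Fq.map (algebraMap ℚ ℂ) = Fc := by
    ext i j; simp [hFq, hFc, Matrix.map_apply]
  set pr : Fin d → ℝ := fun i => (p i : ℝ) with hprdef
  have hv₀r : (fun j => (algebraMap ℚ ℝ) (v₀ j)) = pr := by
    funext j; simp [hv₀, hprdef]
  -- the annihilator ideal of v₀
  set I : Ideal ℚ[X] :=
    { carrier := {f : ℚ[X] | (Polynomial.aeval Fq f) *ᵥ v₀ = 0}
      add_mem' := by
        intro a b ha hb
        simp only [Set.mem_setOf_eq, map_add, Matrix.add_mulVec] at *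
        rw [ha, hb, add_zero]
      zero_mem' := by simp
      smul_mem' := by
        intro c x hx
        simp only [Set.mem_setOf_eq, smul_eq_mul, _root_.map_mul,
          ← Matrix.mulVec_mulVec] at *
        rw [hx, Matrix.mulVec_zero] } with hI
  have hmemI : ∀ f : ℚ[X], f ∈ I ↔ (Polynomial.aeval Fq f) *ᵥ v₀ = 0 := fun f => Iff.rfl
  have hχI : Fq.charpoly ∈ I := by
    rw [hmemI, Matrix.aeval_self_charpoly, Matrix.zero_mulVec]
  have hχne : Fq.charpoly ≠ 0 := (Fq.charpoly_monic).ne_zero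
  -- generator
  obtain ⟨g₀, hg₀'⟩ := (IsPrincipalIdealRing.principal I)
  have hg₀ : I = Ideal.span {g₀} := hg₀'.trans (Ideal.submodule_span_eq)
  have hg₀ne : g₀ ≠ 0 := by
    rintro rfl
    rw [hg₀, Ideal.span_singleton_eq_bot.mpr rfl] at hχI
    exact hχne (by simpa using hχI)
  set lc := g₀.leadingCoeff with hlc
  have hlcne : lc ≠ 0 := Polynomial.leadingCoeff_ne_zero.mpr hg₀ne
  set g : ℚ[X] := g₀ * Polynomial.C lc⁻¹ with hgdef
  have hgmonic : g.Monic := Polynomial.monic_mul_leadingCoeff_inv hg₀ne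
  have hgne : g ≠ 0 := hgmonic.ne_zero
  have hg₀g : g₀ = g * Polynomial.C lc := by
    rw [hgdef, mul_assoc, ← Polynomial.C_mul, inv_mul_cancel₀ hlcne, Polynomial.C_1, mul_one]
  have hgI : g ∈ I := by
    rw [hg₀]
    exact Ideal.mul_mem_right _ _ (Ideal.subset_span rfl)
  have hgdvd : ∀ f ∈ I, g ∣ f := by
    intro f hf
    rw [hg₀, Ideal.mem_span_singleton] at hf
    exact dvd_trans ⟨Polynomial.C lc, hg₀g⟩ hf
  have hv₀ne : v₀ ≠ 0 := by
    intro h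
    apply hp
    funext i
    have := congrFun h i
    simpa [hv₀] using this
  have hg1 : g ≠ 1 := by
    intro h
    apply hv₀ne
    have := (hmemI g).mp hgI
    rw [h] at this
    simpa using this
  have hkpos : 0 < g.natDegree := by
    rcases Nat.eq_zero_or_pos g.natDegree with h | h
    · exact absurd ((Polynomial.Monic.natDegree_eq_zero hgmonic).mp h) hg1
    · exact h
  set k := g.natDegree with hk
  -- the matrix of the first k iterates, and its ℚ-kernel is trivial
  set Mq : Matrix (Fin d) (Fin k) ℚ := fun j i => ((Fq ^ (i : ℕ)) *ᵥ v₀) j with hMq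
  have hMker : ∀ c : Fin k → ℚ, Mq *ᵥ c = 0 → c = 0 := by
    intro c hc
    set cc : ℕ → ℚ := fun n => if hn : n < k then c ⟨n, hn⟩ else 0 with hcc
    set h : ℚ[X] := ∑ i ∈ Finset.range k, Polynomial.C (cc i) * Polynomial.X ^ i with hh
    have hcoeff : ∀ j : ℕ, h.coeff j = if j ∈ Finset.range k then cc j else 0 := by
      intro j
      rw [hh, Polynomial.finset_sum_coeff]
      simp only [Polynomial.coeff_C_mul, Polynomial.coeff_X_pow, mul_ite, mul_one, mul_zero]
      exact Finset.sum_ite_eq (Finset.range k) j cc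
    have hsum : (Polynomial.aeval Fq h) *ᵥ v₀ = ∑ i ∈ Finset.range k, cc i • ((Fq ^ i) *ᵥ v₀) := by
      rw [hh, map_sum, sum_mulVec]
      refine Finset.sum_congr rfl fun i _ => ?_
      rw [_root_.map_mul, Polynomial.aeval_C, Polynomial.aeval_X_pow, ← Algebra.smul_def,
        Matrix.smul_mulVec]
    have hsum2 : ∑ i ∈ Finset.range k, cc i • ((Fq ^ i) *ᵥ v₀) = Mq *ᵥ c := by
      rw [← Fin.sum_univ_eq_sum_range (fun i => cc i • ((Fq ^ i) *ᵥ v₀)) k]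
      funext j
      rw [Finset.sum_apply]
      simp only [Pi.smul_apply, smul_eq_mul]
      rw [Matrix.mulVec, dotProduct]
      refine Finset.sum_congr rfl fun i _ => ?_
      rw [hcc]
      simp only [Fin.is_lt, dif_pos, Fin.eta]
      rw [hMq, mul_comm]
    have hhI : h ∈ I := by
      rw [hmemI, hsum, hsum2, hc]
    have hdvdh := hgdvd h hhI
    by_cases hh0 : h = 0
    · funext i
      have h1 := hcoeff (i : ℕ)
      rw [hh0] at h1
      simp only [Polynomial.coeff_zero, Finset.mem_range, Fin.is_lt, if_true] at h1
      rw [hcc] at h1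
      simp only [Fin.is_lt, dif_pos, Fin.eta] at h1
      exact h1.symm
    · exfalso
      have h1 : g.degree ≤ h.degree := Polynomial.degree_le_of_dvd hdvdh hh0
      have h2 : h.degree < (k : WithBot ℕ) := by
        rw [Polynomial.degree_lt_iff_coeff_zero]
        intro m hm
        rw [hcoeff m, if_neg]
        simp only [Finset.mem_range, not_lt]
        exact_mod_cast hm
      rw [Polynomial.degree_eq_natDegree hgne, ← hk] at h1
      exact absurd (lt_of_le_of_lt h1 h2) (lt_irrefl _)
  -- left inverse over ℚ, cast to ℝ
  have hker : LinearMap.ker (Matrix.toLin' Mq) = ⊥ := by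
    rw [LinearMap.ker_eq_bot']
    intro c hc
    exact hMker c (by rwa [Matrix.toLin'_apply] at hc)
  obtain ⟨pinv, hpinv⟩ := (Matrix.toLin' Mq).exists_leftInverse_of_injective hker
  set P := LinearMap.toMatrix' pinv with hP
  have hPM : P * Mq = 1 := by
    have h2 := congrArg LinearMap.toMatrix' hpinv
    rwa [LinearMap.toMatrix'_comp, LinearMap.toMatrix'_toLin', LinearMap.toMatrix'_id] at h2
  set Mr : Matrix (Fin d) (Fin k) ℝ := Mq.map (algebraMap ℚ ℝ) with hMr
  have hPMr : (P.map (algebraMap ℚ ℝ)) * Mr = 1 := by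
    rw [hMr, ← Matrix.map_mul, hPM, Matrix.map_one _ (map_zero _) (map_one _)]
  have hMrker : ∀ c : Fin k → ℝ, Mr *ᵥ c = 0 → c = 0 := by
    intro c hc
    have h3 : (P.map (algebraMap ℚ ℝ) * Mr) *ᵥ c = 0 := by
      rw [← Matrix.mulVec_mulVec, hc, Matrix.mulVec_zero]
    rwa [hPMr, Matrix.one_mulVec] at h3
  have hpowcast : ∀ i : ℕ, (Fq ^ i).map (algebraMap ℚ ℝ) = Fr ^ i := by
    intro i
    have h4 := map_pow ((algebraMap ℚ ℝ).mapMatrix) Fq i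
    simp only [RingHom.mapMatrix_apply] at h4
    rw [h4, hFqr]
  have hcolcast : ∀ i : ℕ, (fun j => (algebraMap ℚ ℝ) (((Fq ^ i) *ᵥ v₀) j)) = (Fr ^ i) *ᵥ pr := by
    intro i
    rw [← mulVec_map (algebraMap ℚ ℝ) (Fq ^ i) v₀, hpowcast, hv₀r]
  -- division of the C-charpoly by g over ℝ
  set pC : ℝ[X] := LinearMap.charpoly (A.restrict hCinv) with hpCdef
  set gr : ℝ[X] := g.map (algebraMap ℚ ℝ) with hgr
  have hgrmonic : gr.Monic := hgmonic.map _
  have hgrdeg : gr.natDegree = k := by rw [hgr, Polynomial.natDegree_map]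
  have hgkill : (Polynomial.aeval Fr gr) *ᵥ pr = 0 := by
    have h0 : (Polynomial.aeval Fq g) *ᵥ v₀ = 0 := (hmemI g).mp hgI
    have h1 : ((Polynomial.aeval Fq g).map (algebraMap ℚ ℝ)) *ᵥ (fun j => (algebraMap ℚ ℝ) (v₀ j))
        = 0 := by
      rw [mulVec_map (algebraMap ℚ ℝ) _ v₀, h0]
      funext j; simp
    rw [aeval_map_matrix ℝ, hFqr, hv₀r] at h1
    rw [hgr, Polynomial.aeval_map_algebraMap]
    exact h1
  have hpCkill : (Polynomial.aeval Fr pC) *ᵥ pr = 0 := by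
    have h5 := charpoly_kills A C hCinv pr hpC
    rw [← hpCdef, hA, aeval_mulVecLin] at h5
    exact h5
  set r : ℝ[X] := pC %ₘ gr with hr
  have hrkill : (Polynomial.aeval Fr r) *ᵥ pr = 0 := by
    have hrepr : r = pC - gr * (pC /ₘ gr) := by
      rw [hr, Polynomial.modByMonic_eq_sub_mul_div pC gr]
    rw [hrepr, mul_comm gr (pC /ₘ gr), map_sub, _root_.map_mul, Matrix.sub_mulVec, hpCkill,
      ← Matrix.mulVec_mulVec, hgkill, Matrix.mulVec_zero, zero_sub, neg_zero]
  have hrdeglt : r.degree < gr.degree := Polynomial.degree_modByMonic_lt pC hgrmonic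
  have hr0 : r = 0 := by
    by_contra hrne
    have hnat : r.natDegree < k := by
      have h6 := hrdeglt
      rw [Polynomial.degree_eq_natDegree hgrmonic.ne_zero, hgrdeg] at h6
      exact (Polynomial.natDegree_lt_iff_degree_lt hrne).mpr h6
    set cr : Fin k → ℝ := fun i => r.coeff i with hcr
    have haer : Polynomial.aeval Fr r = ∑ i ∈ Finset.range k, r.coeff i • Fr ^ i :=
      Polynomial.aeval_eq_sum_range' hnat Fr
    have h4 : (∑ i ∈ Finset.range k, r.coeff i • Fr ^ i) *ᵥ pr
        = ∑ i ∈ Finset.range k, r.coeff i • ((Fr ^ i) *ᵥ pr) := by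
      rw [sum_mulVec]
      exact Finset.sum_congr rfl fun i _ => Matrix.smul_mulVec _ _ _
    have h5 : ∑ i ∈ Finset.range k, r.coeff i • ((Fr ^ i) *ᵥ pr) = 0 := by
      rw [← h4, ← haer, hrkill]
    have h6 : Mr *ᵥ cr = ∑ i ∈ Finset.range k, r.coeff i • ((Fr ^ i) *ᵥ pr) := by
      rw [← Fin.sum_univ_eq_sum_range (fun i => r.coeff i • ((Fr ^ i) *ᵥ pr)) k]
      funext j
      rw [Finset.sum_apply]
      simp only [Pi.smul_apply, smul_eq_mul]
      rw [Matrix.mulVec, dotProduct]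
      refine Finset.sum_congr rfl fun i _ => ?_
      have h7 := congrFun (hcolcast (i : ℕ)) j
      have h8 : Mr j i = (algebraMap ℚ ℝ) (((Fq ^ (i : ℕ)) *ᵥ v₀) j) := by
        rw [hMr, Matrix.map_apply, hMq]
      rw [h8, h7, hcr, mul_comm]
    have h9 : cr = 0 := hMrker cr (h6.trans h5)
    apply hrne
    ext n
    by_cases hn : n < k
    · have := congrFun h9 ⟨n, hn⟩
      simpa [hcr] using this
    · simp only [Polynomial.coeff_zero]
      exact Polynomial.coeff_eq_zero_of_natDegree_lt (lt_of_lt_of_le hnat (not_lt.mp hn))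
  have hgrdvdpC : gr ∣ pC := by
    have h10 := Polynomial.modByMonic_add_div pC gr
    refine ⟨pC /ₘ gr, ?_⟩
    conv_lhs => rw [← h10]
    rw [← hr, hr0, zero_add]
  -- irreducible factor and complex root
  have hgnotunit : ¬ IsUnit g := by
    intro hu
    have := Polynomial.degree_eq_zero_of_isUnit hu
    rw [Polynomial.degree_eq_natDegree hgne] at this
    exact hg1 ((Polynomial.Monic.natDegree_eq_zero hgmonic).mp (by exact_mod_cast this))
  obtain ⟨g₁, hg₁irr, hg₁dvd⟩ := WfDvdMonoid.exists_irreducible_factor hgnotunit hgne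
  have hg₁ne : g₁ ≠ 0 := hg₁irr.ne_zero
  have hg₁c_deg : 0 < (g₁.map (algebraMap ℚ ℂ)).degree := by
    rw [Polynomial.degree_map]
    exact Polynomial.degree_pos_of_irreducible hg₁irr
  obtain ⟨z, hz⟩ := Complex.exists_root hg₁c_deg
  have hg₁χ : g₁ ∣ Fq.charpoly := dvd_trans hg₁dvd (hgdvd _ hχI)
  have hrootχ : (Fc.charpoly).IsRoot z := by
    have h7 : Fc.charpoly = Fq.charpoly.map (algebraMap ℚ ℂ) := by
      rw [← hFqc, Matrix.charpoly_map]
    have h8 : g₁.map (algebraMap ℚ ℂ) ∣ Fc.charpoly := by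
      rw [h7]; exact Polynomial.map_dvd _ hg₁χ
    exact hz.dvd h8
  obtain ⟨w, hwne, hww⟩ := exists_eigenvec hrootχ
  have hdetc : (Polynomial.aeval Fc g₁).det = 0 := by
    apply Matrix.exists_mulVec_eq_zero_iff.mp
    refine ⟨w, hwne, ?_⟩
    rw [aeval_mulVec_eigen hww g₁]
    have h11 : (Polynomial.aeval z g₁) = 0 := by
      rw [Polynomial.aeval_def, Polynomial.eval₂_eq_eval_map]
      exact hz
    rw [h11, zero_smul]
  have hdetq : (Polynomial.aeval Fq g₁).det = 0 := by
    have h9 : (algebraMap ℚ ℂ) (Polynomial.aeval Fq g₁).det = 0 := by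
      rw [RingHom.map_det, RingHom.mapMatrix_apply, aeval_map_matrix ℂ, hFqc]
      exact hdetc
    exact (algebraMap ℚ ℂ).injective (h9.trans (map_zero _).symm)
  have hdetqT : (Polynomial.aeval Fqᵀ g₁).det = 0 := by
    rw [← aeval_transpose, Matrix.det_transpose]
    exact hdetq
  obtain ⟨q', hq'ne, hq'ker⟩ := Matrix.exists_mulVec_eq_zero_iff.mpr hdetqT
  -- clear denominators
  set D : ℤ := ∏ i, ((q' i).den : ℤ) with hD
  have hDne : D ≠ 0 := by
    rw [hD]
    exact Finset.prod_ne_zero_iff.mpr fun i _ =>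
      Int.natCast_ne_zero.mpr (q' i).den_nz
  set qI : Fin d → ℤ := fun i => (q' i).num * (D / ((q' i).den : ℤ)) with hqI
  have hcastq : ∀ i, ((qI i : ℚ)) = q' i * (D : ℚ) := by
    intro i
    have hdvd : ((q' i).den : ℤ) ∣ D := by
      rw [hD]; exact Finset.dvd_prod_of_mem _ (Finset.mem_univ i)
    have hden : ((q' i).den : ℚ) ≠ 0 := by
      exact_mod_cast (q' i).den_nz
    have e2 : (((D / ((q' i).den : ℤ)) : ℤ) : ℚ) = (D : ℚ) / ((((q' i).den : ℤ)) : ℚ) :=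
      Int.cast_div_charZero hdvd
    calc ((qI i : ℚ)) = ((q' i).num : ℚ) * ((D : ℚ) / ((((q' i).den : ℤ)) : ℚ)) := by
          rw [hqI, Int.cast_mul, e2]
      _ = (((q' i).num : ℚ) / ((q' i).den : ℚ)) * (D : ℚ) := by push_cast; ring
      _ = q' i * (D : ℚ) := by rw [Rat.num_div_den]
  have hqIne : qI ≠ 0 := by
    obtain ⟨i, hi⟩ := Function.ne_iff.mp hq'ne
    intro h0
    have h1 : qI i = 0 := congrFun h0 i
    have h2 : ((qI i : ℚ)) = 0 := by rw [h1]; simp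
    rw [hcastq i] at h2
    rcases mul_eq_zero.mp h2 with h3 | h3
    · exact hi h3
    · exact hDne (by exact_mod_cast h3)
  have hqIker : (Polynomial.aeval Fqᵀ g₁) *ᵥ (fun i => (qI i : ℚ)) = 0 := by
    have h11 : (fun i => (qI i : ℚ)) = (D : ℚ) • q' := by
      funext i; rw [hcastq i, Pi.smul_apply, smul_eq_mul, mul_comm]
    rw [h11, Matrix.mulVec_smul, hq'ker, smul_zero]
  have hqIkerR : (Polynomial.aeval Frᵀ g₁) *ᵥ (fun i => (qI i : ℝ)) = 0 := by
    have h12 : ((Polynomial.aeval Fqᵀ g₁).map (algebraMap ℚ ℝ))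
        *ᵥ (fun i => (algebraMap ℚ ℝ) ((qI i : ℚ))) = 0 := by
      rw [mulVec_map (algebraMap ℚ ℝ) _ (fun i => ((qI i : ℚ))), hqIker]
      funext i; simp
    rw [aeval_map_matrix ℝ] at h12
    have h13 : (Fqᵀ).map (algebraMap ℚ ℝ) = Frᵀ := by
      rw [← hFqr]; exact Matrix.transpose_map
    rw [h13] at h12
    have h14 : (fun i => (algebraMap ℚ ℝ) ((qI i : ℚ))) = fun i => (qI i : ℝ) := by
      funext i; simp
    rwa [h14] at h12
  -- coprimality from disjoint spectra
  set qS : ℝ[X] := LinearMap.charpoly (A.restrict hSUinv) with hqSdef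
  set G₁ : ℝ[X] := g₁.map (algebraMap ℚ ℝ) with hG₁
  have hG₁ne : G₁ ≠ 0 := Polynomial.map_ne_zero hg₁ne
  have hcop : IsCoprime G₁ qS := by
    by_contra hnc
    rw [← EuclideanDomain.gcd_isUnit_iff] at hnc
    set dd := EuclideanDomain.gcd G₁ qS with hdd
    have hddne : dd ≠ 0 := by
      intro h0
      rw [hdd] at h0
      exact hG₁ne (EuclideanDomain.gcd_eq_zero_iff.mp h0).1
    have hdddeg : 0 < (dd.map (algebraMap ℝ ℂ)).degree := by
      rw [Polynomial.degree_map]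
      rcases lt_or_eq_of_le (Polynomial.zero_le_degree_iff.mpr hddne) with h | h
      · exact h
      · exact absurd (Polynomial.isUnit_iff_degree_eq_zero.mpr h.symm) hnc
    obtain ⟨w2, hw2⟩ := Complex.exists_root hdddeg
    have hw2G : (G₁.map (algebraMap ℝ ℂ)).IsRoot w2 :=
      hw2.dvd (Polynomial.map_dvd _ (EuclideanDomain.gcd_dvd_left _ _))
    have hw2q : (qS.map (algebraMap ℝ ℂ)).IsRoot w2 :=
      hw2.dvd (Polynomial.map_dvd _ (EuclideanDomain.gcd_dvd_right _ _))
    have hgrpc : gr.map (algebraMap ℝ ℂ) ∣ pC.map (algebraMap ℝ ℂ) :=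
      Polynomial.map_dvd _ hgrdvdpC
    have hG₁gr : G₁.map (algebraMap ℝ ℂ) ∣ gr.map (algebraMap ℝ ℂ) :=
      Polynomial.map_dvd _ (Polynomial.map_dvd _ hg₁dvd)
    have hw2pC : (pC.map (algebraMap ℝ ℂ)).IsRoot w2 := hw2G.dvd (dvd_trans hG₁gr hgrpc)
    exact hspec w2 ⟨hw2pC, hw2q⟩
  obtain ⟨a, b, hab⟩ := hcop
  refine ⟨qI, hqIne, ?_⟩
  intro v hv
  have hqSkill : (Polynomial.aeval Fr qS) *ᵥ v = 0 := by
    have h15 := charpoly_kills A SU hSUinv v hv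
    rw [← hqSdef, hA, aeval_mulVecLin] at h15
    exact h15
  have hv2 : v = (Polynomial.aeval Fr (a * G₁)) *ᵥ v := by
    have h16 : (Polynomial.aeval Fr (a * G₁ + b * qS)) *ᵥ v = v := by
      rw [hab, _root_.map_one, Matrix.one_mulVec]
    rw [map_add, Matrix.add_mulVec] at h16
    have h17 : (Polynomial.aeval Fr (b * qS)) *ᵥ v = 0 := by
      rw [_root_.map_mul, ← Matrix.mulVec_mulVec, hqSkill, Matrix.mulVec_zero]
    rw [h17, add_zero] at h16
    exact h16.symm
  have h18 : (Polynomial.aeval Fr G₁)ᵀ *ᵥ (fun i => (qI i : ℝ)) = 0 := by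
    rw [aeval_transpose, hG₁, Polynomial.aeval_map_algebraMap]
    exact hqIkerR
  calc (fun i => (qI i : ℝ)) ⬝ᵥ v
      = (fun i => (qI i : ℝ)) ⬝ᵥ ((Polynomial.aeval Fr (G₁ * a)) *ᵥ v) := by
        rw [mul_comm G₁ a, ← hv2]
    _ = (fun i => (qI i : ℝ)) ⬝ᵥ ((Polynomial.aeval Fr G₁) *ᵥ ((Polynomial.aeval Fr a) *ᵥ v)) := by
        rw [_root_.map_mul, Matrix.mulVec_mulVec]
    _ = ((Polynomial.aeval Fr G₁)ᵀ *ᵥ (fun i => (qI i : ℝ))) ⬝ᵥ ((Polynomial.aeval Fr a) *ᵥ v) := by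
        rw [Matrix.dotProduct_mulVec, ← Matrix.mulVec_transpose]
    _ = 0 := by rw [h18, zero_dotProduct]


end Stmt17Helpers

open Polynomial Matrix Real

/-- if `F ∈ SL(d,ℤ)` is not Katznelson irreducible, then there is a
continuous function on `𝕋^d` with trivial periodic cycle functionals which is not
cohomologous to a constant. -/
theorem stmt_17 (d : ℕ) (F G : Matrix (Fin d) (Fin d) ℤ)
    (hdet : F.det = 1) (hFG : F * G = 1)
    (A : (Fin d → ℝ) →ₗ[ℝ] (Fin d → ℝ))
    (hA : A = ((F.map (Int.cast : ℤ → ℝ)).mulVecLin))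
    (S C U : Submodule ℝ (Fin d → ℝ))
    (hcompl : IsCompl C (S ⊔ U)) (hSU : Disjoint S U)
    (hCinv : ∀ x ∈ C, A x ∈ C) (hSinv : ∀ x ∈ S, A x ∈ S) (hUinv : ∀ x ∈ U, A x ∈ U)
    (hSUinv : ∀ x ∈ S ⊔ U, A x ∈ S ⊔ U)
    -- disjoint spectra of `F|_C` and `F|_{S⊕U}` (partial hyperbolicity)
    (hspec : ∀ z : ℂ, ¬ (((LinearMap.charpoly (A.restrict hCinv)).map
        (algebraMap ℝ ℂ)).IsRoot z ∧
      ((LinearMap.charpoly (A.restrict hSUinv)).map (algebraMap ℝ ℂ)).IsRoot z))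
    -- `F` is NOT Katznelson irreducible
    (hnotKatz : ∃ p : Fin d → ℤ, p ≠ 0 ∧ (fun i => (p i : ℝ)) ∈ C)
    -- the induced toral automorphism and its inverse
    (T Tinv : (Fin d → AddCircle (1 : ℝ)) → (Fin d → AddCircle (1 : ℝ)))
    (hT : ∀ x i, T x i = ∑ j, F i j • x j)
    (hTinv : ∀ x i, Tinv x i = ∑ j, G i j • x j)
    -- stable / unstable relations: translation by (the projection of) a vector
    -- of `S` resp. `U`
    (sRel uRel : (Fin d → AddCircle (1 : ℝ)) → (Fin d → AddCircle (1 : ℝ)) → Prop)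
    (hsRel : ∀ x y, sRel x y ↔ ∃ v ∈ S, y = x + fun i => ((v i : ℝ) : AddCircle (1 : ℝ)))
    (huRel : ∀ x y, uRel x y ↔ ∃ v ∈ U, y = x + fun i => ((v i : ℝ) : AddCircle (1 : ℝ))) :
    ∃ φ : (Fin d → AddCircle (1 : ℝ)) → ℝ, Continuous φ ∧
      TrivialPCF T Tinv sRel uRel φ ∧
      ¬ ∃ (u : (Fin d → AddCircle (1 : ℝ)) → ℝ) (K : ℝ),
        Continuous u ∧ ∀ x, φ x = u (T x) - u x + K := by
  
  classical
  obtain ⟨p, hpne, hpC⟩ := hnotKatz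
  obtain ⟨q, hqne, hqperp⟩ := Stmt17Helpers.partA d F A hA C (S ⊔ U) hCinv hSUinv hspec p hpne hpC
  set mkh : ℝ →+ AddCircle (1 : ℝ) := QuotientAddGroup.mk' (AddSubgroup.zmultiples (1:ℝ))
    with hmkh
  have hmk : ∀ r : ℝ, mkh r = (r : AddCircle (1:ℝ)) := fun r => rfl
  have hzsmul : ∀ (z : ℤ) (r : ℝ),
      z • ((r : ℝ) : AddCircle (1:ℝ)) = (((z : ℝ) * r : ℝ) : AddCircle (1:ℝ)) := by
    intro z r
    rw [← hmk, ← map_zsmul mkh z r, zsmul_eq_mul, hmk]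
  have hcoe_int_zero : ∀ z : ℤ, ((z : ℝ) : AddCircle (1:ℝ)) = 0 := by
    intro z
    rw [← hmk, hmkh]
    rw [QuotientAddGroup.mk'_apply, QuotientAddGroup.eq_zero_iff]
    exact ⟨z, by simp⟩
  have hcoe_eq_zero : ∀ t : ℝ, ((t : ℝ) : AddCircle (1:ℝ)) = 0 ↔ ∃ z : ℤ, t = (z : ℝ) := by
    intro t
    constructor
    · intro h
      rw [← hmk, hmkh, QuotientAddGroup.mk'_apply, QuotientAddGroup.eq_zero_iff] at h
      obtain ⟨z, hz⟩ := h
      exact ⟨z, by simpa [zsmul_eq_mul] using hz.symm⟩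
    · rintro ⟨z, rfl⟩
      exact hcoe_int_zero z
  -- the cosine function on the circle
  set cF : AddCircle (1:ℝ) → ℝ := fun w => ((AddCircle.toCircle w : Circle) : ℂ).re with hcF
  have hcF_cont : Continuous cF :=
    Complex.continuous_re.comp (continuous_subtype_val.comp AddCircle.continuous_toCircle)
  have hcF_coe : ∀ t : ℝ, cF ((t : ℝ) : AddCircle (1:ℝ)) = Real.cos (2 * π * t) := by
    intro t
    rw [hcF]
    show ((AddCircle.toCircle ((t : ℝ) : AddCircle (1:ℝ)) : Circle) : ℂ).re = _
    rw [AddCircle.toCircle_apply_mk, Circle.coe_exp, Complex.exp_ofReal_mul_I_re]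
    norm_num
  have hcF_le : ∀ w, cF w ≤ 1 := by
    intro w
    induction w using QuotientAddGroup.induction_on with
    | H t =>
      rw [hcF_coe t]
      exact Real.cos_le_one _
  -- the linear functional on the torus
  set Ψ : (Fin d → AddCircle (1:ℝ)) → AddCircle (1:ℝ) := fun x => ∑ i, q i • x i with hΨ
  have hΨcont : Continuous Ψ := by
    apply continuous_finset_sum
    intro i _
    exact (continuous_zsmul (q i)).comp (continuous_apply i)
  set φ : (Fin d → AddCircle (1:ℝ)) → ℝ := fun x => cF (Ψ x) with hφ
  have hφcont : Continuous φ := hcF_cont.comp hΨcont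
  have hφle : ∀ z : (Fin d → AddCircle (1:ℝ)), φ z ≤ 1 := fun z => hcF_le (Ψ z)
  set πh : (Fin d → ℝ) → (Fin d → AddCircle (1:ℝ)) := fun v i => ((v i : ℝ) : AddCircle (1:ℝ)) with hπh
  have hΨadd : ∀ a b : (Fin d → AddCircle (1:ℝ)), Ψ (a + b) = Ψ a + Ψ b := by
    intro a b
    rw [hΨ]
    simp only [Pi.add_apply, smul_add]
    rw [Finset.sum_add_distrib]
  have hΨπ : ∀ v : Fin d → ℝ,
      Ψ (πh v) = ((∑ i, (q i : ℝ) * v i : ℝ) : AddCircle (1:ℝ)) := by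
    intro v
    show ∑ i, q i • ((v i : ℝ) : AddCircle (1:ℝ)) = _
    rw [Finset.sum_congr rfl fun i _ => hzsmul (q i) (v i)]
    rw [← hmk, map_sum mkh]
    rfl
  have hφπ : ∀ (x : (Fin d → AddCircle (1:ℝ))) (v : Fin d → ℝ), v ∈ S ⊔ U → φ (x + πh v) = φ x := by
    intro x v hv
    rw [hφ]
    show cF (Ψ (x + πh v)) = cF (Ψ x)
    have h1 : (∑ i, (q i : ℝ) * v i : ℝ) = 0 := hqperp v hv
    rw [hΨadd, hΨπ, h1, ← hmk, map_zero, add_zero]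
  -- matrices
  set Fr : Matrix (Fin d) (Fin d) ℝ := F.map (Int.cast : ℤ → ℝ) with hFr
  set Gr : Matrix (Fin d) (Fin d) ℝ := G.map (Int.cast : ℤ → ℝ) with hGr
  have hGF : G * F = 1 := mul_eq_one_comm.mp hFG
  have hmapmul : ∀ (M N : Matrix (Fin d) (Fin d) ℤ), M * N = 1 →
      (M.map (Int.cast : ℤ → ℝ)) * (N.map (Int.cast : ℤ → ℝ)) = 1 := by
    intro M N hMN
    have h1 : ((M * N).map (Int.castRingHom ℝ) : Matrix (Fin d) (Fin d) ℝ)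
        = M.map (Int.castRingHom ℝ) * N.map (Int.castRingHom ℝ) := Matrix.map_mul
    rw [hMN, Matrix.map_one _ (map_zero _) (map_one _)] at h1
    exact h1.symm
  have hGrFr : Gr * Fr = 1 := hmapmul G F hGF
  have hFrGr : Fr * Gr = 1 := hmapmul F G hFG
  have hAinj : ∀ w : Fin d → ℝ, Fr *ᵥ w = 0 → w = 0 := by
    intro w hw
    have : (Gr * Fr) *ᵥ w = 0 := by rw [← Matrix.mulVec_mulVec, hw, Matrix.mulVec_zero]
    rwa [hGrFr, Matrix.one_mulVec] at this
  have hAmap : ∀ v ∈ S ⊔ U, Fr *ᵥ v ∈ S ⊔ U := by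
    intro v hv
    have h2 := hSUinv v hv
    rwa [hA, Matrix.mulVecLin_apply] at h2
  have hGmap : ∀ v ∈ S ⊔ U, Gr *ᵥ v ∈ S ⊔ U := by
    intro v hv
    have hRinj : Function.Injective (A.restrict hSUinv) := by
      intro a b hab
      have h3 : A (a : Fin d → ℝ) = A (b : Fin d → ℝ) := by
        have := congrArg (Subtype.val) hab
        simpa [LinearMap.restrict_coe_apply] using this
      rw [hA, Matrix.mulVecLin_apply, Matrix.mulVecLin_apply] at h3
      have h4 : Fr *ᵥ ((a : Fin d → ℝ) - (b : Fin d → ℝ)) = 0 := by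
        rw [Matrix.mulVec_sub, h3, sub_self]
      have h5 := hAinj _ h4
      exact Subtype.ext (by
        have := sub_eq_zero.mp h5
        exact this)
    have hRsurj := (LinearMap.injective_iff_surjective).mp hRinj
    obtain ⟨w, hw⟩ := hRsurj ⟨v, hv⟩
    have hw2 : Fr *ᵥ (w : Fin d → ℝ) = v := by
      have h20 : ((A.restrict hSUinv) w : Fin d → ℝ) = v := by
        rw [hw]
      rw [LinearMap.restrict_coe_apply] at h20
      rwa [hA, Matrix.mulVecLin_apply] at h20
    have : Gr *ᵥ v = (w : Fin d → ℝ) := by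
      rw [← hw2, Matrix.mulVec_mulVec, hGrFr, Matrix.one_mulVec]
    rw [this]
    exact w.2
  -- translation step lemmas
  have hstep : ∀ (M : Matrix (Fin d) (Fin d) ℤ) (TM : (Fin d → AddCircle (1:ℝ)) → (Fin d → AddCircle (1:ℝ))),
      (∀ x i, TM x i = ∑ j, M i j • x j) →
      ∀ (x : (Fin d → AddCircle (1:ℝ))) (v : Fin d → ℝ),
        TM (x + πh v) = TM x + πh ((M.map (Int.cast : ℤ → ℝ)) *ᵥ v) := by
    intro M TM hTM x v
    funext i
    rw [Pi.add_apply, hTM, hTM]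
    have h6 : ∀ j, M i j • (x + πh v) j
        = M i j • x j + ((((M i j : ℝ) * v j : ℝ)) : AddCircle (1:ℝ)) := by
      intro j
      rw [Pi.add_apply, smul_add]
      congr 1
      exact hzsmul (M i j) (v j)
    have h7 : (∑ j, ((((M i j : ℝ) * v j : ℝ)) : AddCircle (1:ℝ)))
        = ((∑ j, (M i j : ℝ) * v j : ℝ) : AddCircle (1:ℝ)) :=
      (map_sum mkh (fun j => (M i j : ℝ) * v j) Finset.univ).symm
    have h8 : (∑ j, (M i j : ℝ) * v j : ℝ) = ((M.map (Int.cast : ℤ → ℝ)) *ᵥ v) i := by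
      rw [Matrix.mulVec, dotProduct]
      exact Finset.sum_congr rfl fun j _ => rfl
    rw [Finset.sum_congr rfl fun j _ => h6 j, Finset.sum_add_distrib, h7, h8]
  have hstepT := hstep F T hT
  have hstepTinv := hstep G Tinv hTinv
  -- iterates of translations stay translations
  have hiter : ∀ (Tf : (Fin d → AddCircle (1:ℝ)) → (Fin d → AddCircle (1:ℝ))) (M : Matrix (Fin d) (Fin d) ℝ),
      (∀ (x : (Fin d → AddCircle (1:ℝ))) (v : Fin d → ℝ), Tf (x + πh v) = Tf x + πh (M *ᵥ v)) →
      (∀ v ∈ S ⊔ U, M *ᵥ v ∈ S ⊔ U) →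
      ∀ (n : ℕ) (x : (Fin d → AddCircle (1:ℝ))) (v : Fin d → ℝ), v ∈ S ⊔ U →
        ∃ w ∈ S ⊔ U, Tf^[n] (x + πh v) = Tf^[n] x + πh w := by
    intro Tf M hst hmap n
    induction n with
    | zero => intro x v hv; exact ⟨v, hv, by simp⟩
    | succ n ih =>
        intro x v hv
        obtain ⟨w, hw, hwe⟩ := ih x v hv
        refine ⟨M *ᵥ w, hmap w hw, ?_⟩
        rw [Function.iterate_succ_apply', Function.iterate_succ_apply', hwe, hst]
  have hiterT := hiter T Fr hstepT hAmap
  have hiterTinv := hiter Tinv Gr hstepTinv hGmap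
  -- trivial PCF
  have hTPCF : TrivialPCF T Tinv sRel uRel φ := by
    intro k γ s hclosed hlegs
    apply Finset.sum_eq_zero
    intro j _
    have hj := hlegs j
    by_cases hsj : s j = true
    · rw [if_pos hsj] at hj ⊢
      obtain ⟨v, hvS, hy⟩ := (hsRel _ _).mp hj
      have hvSU : v ∈ S ⊔ U := Submodule.mem_sup_left hvS
      have hterm : ∀ n : ℕ, φ (T^[n] (γ j.castSucc)) - φ (T^[n] (γ j.succ)) = 0 := by
        intro n
        obtain ⟨w, hw, hwe⟩ := hiterT n (γ j.castSucc) v hvSU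
        rw [hy, show (γ j.castSucc + fun i => ((v i : ℝ) : AddCircle (1:ℝ)))
          = γ j.castSucc + πh v from rfl, hwe, hφπ _ w hw, sub_self]
      show holS T φ (γ j.castSucc) (γ j.succ) = 0
      unfold holS
      rw [tsum_congr hterm, tsum_zero]
    · rw [if_neg hsj] at hj ⊢
      obtain ⟨v, hvU, hy⟩ := (huRel _ _).mp hj
      have hvSU : v ∈ S ⊔ U := Submodule.mem_sup_right hvU
      have hterm : ∀ n : ℕ,
          φ (Tinv^[n + 1] (γ j.castSucc)) - φ (Tinv^[n + 1] (γ j.succ)) = 0 := by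
        intro n
        obtain ⟨w, hw, hwe⟩ := hiterTinv (n + 1) (γ j.castSucc) v hvSU
        rw [hy, show (γ j.castSucc + fun i => ((v i : ℝ) : AddCircle (1:ℝ)))
          = γ j.castSucc + πh v from rfl, hwe, hφπ _ w hw, sub_self]
      show holU Tinv φ (γ j.castSucc) (γ j.succ) = 0
      unfold holU
      rw [tsum_congr hterm, tsum_zero, neg_zero]
  refine ⟨φ, hφcont, hTPCF, ?_⟩
  rintro ⟨u, K, hucont, hcob⟩
  -- T fixes 0, so K = φ 0 = 1
  have hT0 : T 0 = 0 := by
    funext i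
    rw [hT]
    simp
  have hΨ0 : Ψ 0 = 0 := by
    rw [hΨ]
    simp
  have hφ0 : φ 0 = 1 := by
    rw [hφ]
    show cF (Ψ 0) = 1
    rw [hΨ0, show (0 : AddCircle (1:ℝ)) = ((0:ℝ) : AddCircle (1:ℝ)) from rfl, hcF_coe]
    norm_num
  have hK : K = 1 := by
    have h7 := hcob 0
    rw [hT0, hφ0] at h7
    linarith
  -- the periodic point x₀
  obtain ⟨i₀, hi₀⟩ := Function.ne_iff.mp hqne
  set n₁ : ℤ := 2 * q i₀ with hn₁
  have hn₁ne : n₁ ≠ 0 := by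
    rw [hn₁]
    exact mul_ne_zero two_ne_zero (by simpa using hi₀)
  have hn₁r : ((n₁ : ℝ)) ≠ 0 := Int.cast_ne_zero.mpr hn₁ne
  set r₀ : ℝ := 1 / (n₁ : ℝ) with hr₀
  set x₀ : (Fin d → AddCircle (1:ℝ)) := fun j => if j = i₀ then ((r₀ : ℝ) : AddCircle (1:ℝ)) else 0 with hx₀
  have hΨx₀ : Ψ x₀ = (((1:ℝ)/2 : ℝ) : AddCircle (1:ℝ)) := by
    rw [hΨ]
    show ∑ i, q i • x₀ i = _
    rw [Finset.sum_eq_single i₀]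
    · rw [hx₀]
      simp only [eq_self_iff_true, if_true]
      rw [hzsmul]
      congr 1
      have hq0 : (q i₀ : ℝ) ≠ 0 := Int.cast_ne_zero.mpr (by simpa using hi₀)
      rw [hr₀, hn₁]
      push_cast
      field_simp
    · intro b _ hb
      rw [hx₀]
      simp [hb]
    · intro h
      exact absurd (Finset.mem_univ i₀) h
  have hφx₀ : φ x₀ = -1 := by
    rw [hφ]
    show cF (Ψ x₀) = -1
    rw [hΨx₀, hcF_coe, show 2 * π * ((1:ℝ)/2) = π by ring, Real.cos_pi]
  -- torsion points form a finite T-invariant set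
  set N : ℕ := n₁.natAbs with hN
  have hNpos : 0 < N := Int.natAbs_pos.mpr hn₁ne
  set Dset : Set (AddCircle (1:ℝ)) := {w | (N : ℤ) • w = 0} with hDset
  have hDfin : Dset.Finite := by
    apply Set.Finite.subset
      (Set.finite_range (fun m : Fin N => (((m : ℝ) / (N:ℝ) : ℝ) : AddCircle (1:ℝ))))
    intro w hw
    induction w using QuotientAddGroup.induction_on with
    | H t =>
      have h1 : ((((N:ℤ) : ℝ) * t : ℝ) : AddCircle (1:ℝ)) = 0 := by
        rw [← hzsmul]
        exact hw
      rw [hcoe_eq_zero] at h1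
      obtain ⟨z, hz⟩ := h1
      have hNz : ((N:ℤ) : ℝ) ≠ 0 := by
        exact_mod_cast hNpos.ne'
      have ht : t = (z : ℝ) / ((N:ℤ) : ℝ) := by
        field_simp at hz ⊢
        linarith [hz]
      set m : ℤ := z % (N : ℤ) with hm
      have hm0 : 0 ≤ m := Int.emod_nonneg z (by exact_mod_cast hNpos.ne')
      have hmlt : m < (N:ℤ) := Int.emod_lt_of_pos z (by exact_mod_cast hNpos)
      have hmq : z - m = (N:ℤ) * (z / (N:ℤ)) := by
        rw [hm, Int.emod_def]
        ring
      refine ⟨⟨m.toNat, by omega⟩, ?_⟩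
      show ((((m.toNat : ℕ) : ℝ) / (N:ℝ) : ℝ) : AddCircle (1:ℝ)) = ((t : ℝ) : AddCircle (1:ℝ))
      have hmr : ((m.toNat : ℕ) : ℝ) = (m : ℝ) := by
        exact_mod_cast congrArg (Int.cast : ℤ → ℝ) (Int.toNat_of_nonneg hm0)
      have hdiff : ((t - (m : ℝ)/(N:ℝ) : ℝ) : AddCircle (1:ℝ)) = 0 := by
        rw [hcoe_eq_zero]
        refine ⟨z / (N:ℤ), ?_⟩
        rw [ht]
        have h8 : ((z:ℝ) - (m:ℝ)) = ((N:ℤ):ℝ) * ((z / (N:ℤ) : ℤ) : ℝ) := by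
          exact_mod_cast congrArg (fun x : ℤ => (x : ℝ)) hmq
        push_cast at h8 ⊢
        field_simp
        linarith [h8]
      rw [hmr]
      rw [← hmk, ← hmk, ← sub_eq_zero, ← map_sub mkh]
      have h30 : mkh (-(t - (m:ℝ)/(N:ℝ))) = 0 := by
        rw [map_neg, show mkh (t - (m:ℝ)/(N:ℝ)) = 0 from hdiff, neg_zero]
      rw [neg_sub] at h30
      exact h30
  set Dd : Set (Fin d → AddCircle (1:ℝ)) := Set.univ.pi (fun _ : Fin d => Dset) with hDd
  have hDdfin : Dd.Finite := Set.Finite.pi (fun _ => hDfin)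
  have hx₀D : x₀ ∈ Dd := by
    rw [hDd, Set.mem_univ_pi]
    intro i
    simp only [hx₀]
    by_cases hi : i = i₀
    · rw [if_pos hi]
      show (N:ℤ) • ((r₀ : ℝ) : AddCircle (1:ℝ)) = 0
      rw [hzsmul, hcoe_eq_zero]
      rcases Int.natAbs_eq n₁ with h | h
      · refine ⟨1, ?_⟩
        rw [hr₀, show (((N:ℤ)):ℝ) = ((n₁:ℤ):ℝ) by rw [hN, ← h]]
        field_simp
        norm_num
      · refine ⟨-1, ?_⟩
        have hNn : ((N:ℤ) : ℝ) = -((n₁:ℤ):ℝ) := by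
          have h31 : (N:ℤ) = -n₁ := by rw [hN]; omega
          rw [h31]
          push_cast
          ring
        rw [hr₀, hNn]
        field_simp
        norm_num
    · rw [if_neg hi]
      show (N:ℤ) • (0 : AddCircle (1:ℝ)) = 0
      rw [smul_zero]
  have hmapsTo : Set.MapsTo T Dd Dd := by
    intro x hx
    rw [hDd, Set.mem_univ_pi] at hx ⊢
    intro i
    show (N:ℤ) • (T x i) = 0
    rw [hT, Finset.smul_sum]
    apply Finset.sum_eq_zero
    intro j _
    rw [smul_smul, mul_comm, ← smul_smul]
    rw [show ((N:ℤ) • x j) = 0 from hx j, smul_zero]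
  have hforb : ∀ n : ℕ, T^[n] x₀ ∈ Dd := by
    intro n
    exact (hmapsTo.iterate n) hx₀D
  obtain ⟨a, -, b, -, hab, he⟩ :=
    Set.Infinite.exists_ne_map_eq_of_mapsTo (Set.infinite_univ (α := ℕ))
      (fun n _ => hforb n) hDdfin
  have hTinj : Function.Injective T := by
    have hTinvT : ∀ x : (Fin d → AddCircle (1:ℝ)), Tinv (T x) = x := by
      intro x
      funext i
      rw [hTinv]
      calc ∑ j, G i j • (T x) j = ∑ j, ∑ kk, (G i j * F j kk) • x kk := by
            refine Finset.sum_congr rfl fun j _ => ?_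
            rw [hT, Finset.smul_sum]
            exact Finset.sum_congr rfl fun kk _ => smul_smul (G i j) (F j kk) (x kk)
        _ = ∑ kk, (∑ j, G i j * F j kk) • x kk := by
            rw [Finset.sum_comm]
            exact Finset.sum_congr rfl fun kk _ => (Finset.sum_smul).symm
        _ = ∑ kk, (G * F) i kk • x kk := by
            refine Finset.sum_congr rfl fun kk _ => ?_
            rw [Matrix.mul_apply]
        _ = x i := by
            rw [hGF]
            simp [Matrix.one_apply, ite_smul]
    exact Function.LeftInverse.injective hTinvT
  -- get a genuine period
  have hperiod : ∃ m : ℕ, 0 < m ∧ T^[m] x₀ = x₀ := by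
    rcases lt_or_gt_of_ne hab with h | h
    · refine ⟨b - a, by omega, ?_⟩
      have h9 : T^[a] (T^[b - a] x₀) = T^[a] x₀ := by
        rw [← Function.iterate_add_apply, show a + (b - a) = b by omega]
        exact he.symm
      exact (Function.Injective.iterate hTinj a) h9
    · refine ⟨a - b, by omega, ?_⟩
      have h9 : T^[b] (T^[a - b] x₀) = T^[b] x₀ := by
        rw [← Function.iterate_add_apply, show b + (a - b) = a by omega]
        exact he
      exact (Function.Injective.iterate hTinj b) h9
  obtain ⟨m, hm0, hper⟩ := hperiod
  -- telescoping sum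
  have hsum1 : ∑ n ∈ Finset.range m, φ (T^[n] x₀) = (m : ℝ) := by
    have hstep2 : ∀ n : ℕ, φ (T^[n] x₀) = u (T^[n+1] x₀) - u (T^[n] x₀) + 1 := by
      intro n
      rw [Function.iterate_succ_apply', hcob (T^[n] x₀), hK]
    calc ∑ n ∈ Finset.range m, φ (T^[n] x₀)
        = ∑ n ∈ Finset.range m, ((u (T^[n+1] x₀) - u (T^[n] x₀)) + 1) :=
          Finset.sum_congr rfl fun n _ => hstep2 n
      _ = (u (T^[m] x₀) - u (T^[0] x₀)) + m := by
          rw [Finset.sum_add_distrib, Finset.sum_range_sub (fun n => u (T^[n] x₀))]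
          simp
      _ = (m:ℝ) := by
          rw [hper, Function.iterate_zero_apply]
          simp
  have hsum2 : ∑ n ∈ Finset.range m, φ (T^[n] x₀) < (m : ℝ) := by
    have h10 : ∑ n ∈ Finset.range m, φ (T^[n] x₀) < ∑ _n ∈ Finset.range m, (1:ℝ) := by
      apply Finset.sum_lt_sum
      · intro i _
        exact hφle _
      · refine ⟨0, Finset.mem_range.mpr hm0, ?_⟩
        rw [Function.iterate_zero_apply, hφx₀]
        norm_num
    simpa using h10
  linarith
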